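/- arXiv:2409.00431 — 4 statements merged into one kernel-verified Lean document; each statement's English description precedes it below -/
import Mathlib

section
/- Let $c > 0$ and let $x > 1$ be real. Then $\frac{1}{2\pi i}\int_{c-i\infty}^{c+i\infty} \frac{x^s}{s(s+2)(s+3)(s+4)}\,ds = \frac{1}{24} - \frac{1}{4x^2} + \frac{1}{3x^3} - \frac{1}{8x^4}$. -/
open Complex Filter Real MeasureTheory Set FourierTransform

lemma aux_integrable_cexp (b : ℂ) (hb : 0 < b.re) :
    IntegrableOn (fun u : ℝ => Complex.exp (-(b * u))) (Ioi (0:ℝ)) := by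
  refine (exp_neg_integrableOn_Ioi 0 hb).mono' ?_ ?_
  · exact (Continuous.aestronglyMeasurable (by fun_prop)).restrict
  · filter_upwards with u
    simp [Complex.norm_exp]

lemma aux_integral_cexp_Ioi (b : ℂ) (hb : 0 < b.re) :
    ∫ u in Ioi (0:ℝ), Complex.exp (-(b * u)) = 1 / b := by
  have hb0 : b ≠ 0 := fun h => by simp [h] at hb
  have key := integral_Ioi_of_hasDerivAt_of_tendsto
    (f := fun u : ℝ => -Complex.exp (-(b * u)) / b)
    (f' := fun u : ℝ => Complex.exp (-(b * u))) (a := 0) (m := 0)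
    ?_ ?_ ?_ ?_
  · rw [key]; simp [neg_div]
  · apply Continuous.continuousWithinAt; fun_prop
  · intro u hu
    have h2 : HasDerivAt (fun u : ℝ => Complex.exp (-(b * u))) (Complex.exp (-(b*u)) * (-b)) u := by
      have h1 : HasDerivAt (fun u : ℝ => -(b * (u:ℂ))) (-b) u := by
        simpa [Pi.neg_def] using ((Complex.ofRealCLM.hasDerivAt (x := u)).const_mul b).neg
      exact (Complex.hasDerivAt_exp _).comp u h1
    have h3 := (h2.div_const b).neg
    have h4 : -(Complex.exp (-(b*u)) * -b / b) = Complex.exp (-(b*u)) := by field_simp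
    rw [h4] at h3
    simpa [neg_div, Pi.neg_def] using h3
  · exact aux_integrable_cexp b hb
  · rw [tendsto_zero_iff_norm_tendsto_zero]
    have h4 : Tendsto (fun u : ℝ => Real.exp (-(b.re * u)) / ‖b‖) atTop (nhds 0) := by
      have := Real.tendsto_exp_neg_atTop_nhds_zero.comp
        (tendsto_id.const_mul_atTop hb)
      simpa using this.div_const ‖b‖
    refine h4.congr fun u => ?_
    simp [Complex.norm_exp, norm_div]

noncomputable def pfG (c : ℝ) : ℝ → ℂ := fun u =>
  (1/24) * Complex.exp (-((c:ℂ) * u)) - (1/4) * Complex.exp (-(((c:ℂ)+2) * u))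
    + (1/3) * Complex.exp (-(((c:ℂ)+3) * u)) - (1/8) * Complex.exp (-(((c:ℂ)+4) * u))

noncomputable def pf (c : ℝ) : ℝ → ℂ := fun u => if u ≤ 0 then 0 else pfG c u

lemma pf_cont (c : ℝ) : Continuous (pf c) := by
  apply Continuous.if_le continuous_const (by unfold pfG; fun_prop) continuous_id continuous_const
  intro u hu
  have h0 : u = 0 := hu
  subst h0
  norm_num [pfG]

lemma pfG_intble (c : ℝ) (hc : 0 < c) : IntegrableOn (pfG c) (Ioi (0:ℝ)) := by
  have h := fun (a : ℝ) (ha : 0 < a) => aux_integrable_cexp (a:ℂ) (by simpa using ha)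
  have h0 := (h c hc).const_mul (1/24 : ℂ)
  have h2 := (h (c+2) (by linarith)).const_mul (1/4 : ℂ)
  have h3 := (h (c+3) (by linarith)).const_mul (1/3 : ℂ)
  have h4 := (h (c+4) (by linarith)).const_mul (1/8 : ℂ)
  have := ((h0.sub h2).add h3).sub h4
  refine IntegrableOn.congr_fun this (fun u hu => ?_) measurableSet_Ioi
  simp only [pfG, Pi.sub_apply, Pi.add_apply]
  push_cast
  ring

lemma pf_integrable (c : ℝ) (hc : 0 < c) : Integrable (pf c) := by
  rw [← integrableOn_univ, ← Set.Iic_union_Ioi (a := (0:ℝ)), integrableOn_union]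
  constructor
  · refine (integrableOn_zero).congr_fun (fun u hu => ?_) measurableSet_Iic
    simp [pf, (mem_Iic.mp hu)]
  · refine (pfG_intble c hc).congr_fun (fun u hu => ?_) measurableSet_Ioi
    simp [pf, not_le.mpr (mem_Ioi.mp hu)]
lemma pf_fourier (c : ℝ) (hc : 0 < c) (ξ : ℝ) :
    𝓕 (pf c) ξ = (1/24) / ((c:ℂ) + (2*π*ξ:ℝ)*I) - (1/4) / (((c:ℂ)+2) + (2*π*ξ:ℝ)*I)
      + (1/3) / (((c:ℂ)+3) + (2*π*ξ:ℝ)*I) - (1/8) / (((c:ℂ)+4) + (2*π*ξ:ℝ)*I) := by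
  rw [Real.fourier_eq']
  simp only [RCLike.inner_apply, conj_trivial, smul_eq_mul, mul_comm ξ]
  have hint : Integrable (fun v : ℝ => Complex.exp (↑(-2 * π * (v * ξ)) * I) * pf c v) := by
    refine (pf_integrable c hc).bdd_mul (Continuous.aestronglyMeasurable (by fun_prop)) (c := 1) (Filter.Eventually.of_forall fun v => ?_)
    rw [Complex.norm_exp]
    simp
  rw [← MeasureTheory.integral_add_compl (measurableSet_Iic (a := (0:ℝ))) hint, Set.compl_Iic]
  have hIic : ∫ v in Iic (0:ℝ), Complex.exp (↑(-2 * π * (v * ξ)) * I) * pf c v = 0 := by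
    rw [setIntegral_congr_fun measurableSet_Iic (g := fun _ => (0:ℂ))
      (fun v hv => by simp [pf, mem_Iic.mp hv])]
    simp
  rw [hIic, zero_add]
  have key : EqOn (fun v : ℝ => Complex.exp (↑(-2 * π * (v * ξ)) * I) * pf c v)
      (fun v : ℝ =>
        (1/24) * Complex.exp (-(((c:ℂ) + (2*π*ξ:ℝ)*I) * v))
        - (1/4) * Complex.exp (-((((c:ℂ)+2) + (2*π*ξ:ℝ)*I) * v))
        + (1/3) * Complex.exp (-((((c:ℂ)+3) + (2*π*ξ:ℝ)*I) * v))
        - (1/8) * Complex.exp (-((((c:ℂ)+4) + (2*π*ξ:ℝ)*I) * v))) (Ioi 0) := by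
    intro v hv
    simp only [pf, not_le.mpr (mem_Ioi.mp hv), if_false, pfG]
    rw [mul_sub, mul_add, mul_sub]
    congr 1
    · congr 1
      · congr 1
        · rw [mul_comm _ ((1/24 : ℂ) * _), mul_assoc, ← Complex.exp_add]
          congr 2
          push_cast; ring
        · rw [mul_comm _ ((1/4 : ℂ) * _), mul_assoc, ← Complex.exp_add]
          congr 2
          push_cast; ring
      · rw [mul_comm _ ((1/3 : ℂ) * _), mul_assoc, ← Complex.exp_add]
        congr 2
        push_cast; ring
    · rw [mul_comm _ ((1/8 : ℂ) * _), mul_assoc, ← Complex.exp_add]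
      congr 2
      push_cast; ring
  rw [setIntegral_congr_fun measurableSet_Ioi key]
  have hre : ∀ a : ℝ, 0 < a → (((a:ℂ) + (2*π*ξ:ℝ)*I)).re = a := by intro a _; simp
  have hI : ∀ a : ℝ, 0 < a → IntegrableOn
      (fun v : ℝ => Complex.exp (-(((a:ℂ) + (2*π*ξ:ℝ)*I) * v))) (Ioi (0:ℝ)) :=
    fun a ha => aux_integrable_cexp _ (by rw [hre a ha]; exact ha)
  have hI0 := (hI c hc).const_mul (1/24 : ℂ)
  have hI2' := (hI (c+2) (by linarith))
  have hI3' := (hI (c+3) (by linarith))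
  have hI4' := (hI (c+4) (by linarith))
  have e2 : ((c:ℂ)+2) + (2*π*ξ:ℝ)*I = (((c+2:ℝ):ℂ) + (2*π*ξ:ℝ)*I) := by push_cast; ring
  have e3 : ((c:ℂ)+3) + (2*π*ξ:ℝ)*I = (((c+3:ℝ):ℂ) + (2*π*ξ:ℝ)*I) := by push_cast; ring
  have e4 : ((c:ℂ)+4) + (2*π*ξ:ℝ)*I = (((c+4:ℝ):ℂ) + (2*π*ξ:ℝ)*I) := by push_cast; ring
  rw [e2, e3, e4]
  have hI2 := hI2'.const_mul (1/4 : ℂ)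
  have hI3 := hI3'.const_mul (1/3 : ℂ)
  have hI4 := hI4'.const_mul (1/8 : ℂ)
  have J1 : Integrable (fun x : ℝ => (1/24:ℂ) * Complex.exp (-((((c:ℝ):ℂ) + ((2*π*ξ:ℝ):ℂ)*I) * x))
      - (1/4:ℂ) * Complex.exp (-((((c+2:ℝ):ℂ) + ((2*π*ξ:ℝ):ℂ)*I) * x)))
      (volume.restrict (Ioi 0)) := hI0.sub hI2
  have J2 : Integrable (fun x : ℝ => (1/24:ℂ) * Complex.exp (-((((c:ℝ):ℂ) + ((2*π*ξ:ℝ):ℂ)*I) * x))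
      - (1/4:ℂ) * Complex.exp (-((((c+2:ℝ):ℂ) + ((2*π*ξ:ℝ):ℂ)*I) * x))
      + (1/3:ℂ) * Complex.exp (-((((c+3:ℝ):ℂ) + ((2*π*ξ:ℝ):ℂ)*I) * x)))
      (volume.restrict (Ioi 0)) := J1.add hI3
  rw [integral_sub J2 hI4, integral_add J1 hI3,
    integral_sub hI0 hI2, integral_const_mul, integral_const_mul, integral_const_mul, integral_const_mul, aux_integral_cexp_Ioi _ (by rw [hre c hc]; exact hc),
    aux_integral_cexp_Ioi _ (by rw [hre (c+2) (by linarith)]; linarith),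
    aux_integral_cexp_Ioi _ (by rw [hre (c+3) (by linarith)]; linarith),
    aux_integral_cexp_Ioi _ (by rw [hre (c+4) (by linarith)]; linarith)]
  push_cast
  ring
lemma partial_frac (s : ℂ) (h0 : s ≠ 0) (h2 : s + 2 ≠ 0) (h3 : s + 3 ≠ 0) (h4 : s + 4 ≠ 0) :
    (1/24) / s - (1/4) / (s+2) + (1/3) / (s+3) - (1/8) / (s+4)
      = (s * (s+2) * (s+3) * (s+4))⁻¹ := by
  rw [inv_eq_one_div]
  rw [div_sub_div _ _ h0 h2, div_add_div _ _ (mul_ne_zero h0 h2) h3,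
    div_sub_div _ _ (mul_ne_zero (mul_ne_zero h0 h2) h3) h4,
    div_eq_div_iff (mul_ne_zero (mul_ne_zero (mul_ne_zero h0 h2) h3) h4)
      (mul_ne_zero (mul_ne_zero (mul_ne_zero h0 h2) h3) h4)]
  ring

lemma re_ne_zero {z : ℂ} (h : 0 < z.re) : z ≠ 0 := fun hz => by simp [hz] at h

lemma aux_int (c : ℝ) (hc : 0 < c) :
    Integrable (fun t : ℝ => (((c:ℂ) + t*I) * ((c:ℂ) + t*I + 2)
      * ((c:ℂ) + t*I + 3) * ((c:ℂ) + t*I + 4))⁻¹) := by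
  have hne : ∀ (t a : ℝ), 0 ≤ a → ((c:ℂ) + t*I + a) ≠ 0 := by
    intro t a ha
    apply re_ne_zero
    simp
    linarith
  have hcont : Continuous (fun t : ℝ => (((c:ℂ) + t*I) * ((c:ℂ) + t*I + 2)
      * ((c:ℂ) + t*I + 3) * ((c:ℂ) + t*I + 4))⁻¹) := by
    apply Continuous.inv₀ (by fun_prop)
    intro t
    refine mul_ne_zero (mul_ne_zero (mul_ne_zero ?_ ?_) ?_) ?_
    · simpa using hne t 0 le_rfl
    · exact hne t 2 (by norm_num)
    · exact hne t 3 (by norm_num)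
    · exact hne t 4 (by norm_num)
  refine (integrable_inv_one_add_sq.const_mul ((c*(c+2))⁻¹)).mono'
    hcont.aestronglyMeasurable ?_
  filter_upwards with t
  have A1 : c ≤ ‖(c:ℂ) + t*I‖ := by
    have h := Complex.abs_re_le_norm ((c:ℂ) + t*I)
    simp only [Complex.add_re, Complex.ofReal_re, Complex.mul_re, Complex.I_re,
      Complex.ofReal_im, Complex.I_im] at h
    calc c ≤ |c + (t * 0 - 0 * 1)| := by simp [le_abs_self]
    _ ≤ _ := h
  have A2 : c + 2 ≤ ‖(c:ℂ) + t*I + 2‖ := by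
    have h := Complex.abs_re_le_norm ((c:ℂ) + t*I + 2)
    have hre : ((c:ℂ) + t*I + 2).re = c + 2 := by simp
    rw [hre] at h
    calc c + 2 ≤ |c + 2| := le_abs_self _
    _ ≤ _ := h
  have habs3 : ‖(c:ℂ) + t*I + 3‖ = Real.sqrt ((c+3)^2 + t^2) := by
    rw [Complex.norm_def, Complex.normSq_apply]
    congr 1
    simp
    ring
  have habs4 : ‖(c:ℂ) + t*I + 4‖ = Real.sqrt ((c+4)^2 + t^2) := by
    rw [Complex.norm_def, Complex.normSq_apply]
    congr 1
    simp
    ring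
  have A34 : 1 + t^2 ≤ ‖(c:ℂ) + t*I + 3‖ * ‖(c:ℂ) + t*I + 4‖ := by
    rw [habs3, habs4]
    calc 1 + t^2 ≤ (c+3)^2 + t^2 := by nlinarith
    _ = Real.sqrt ((c+3)^2 + t^2) * Real.sqrt ((c+3)^2 + t^2) := by
          rw [Real.mul_self_sqrt (by positivity)]
    _ ≤ Real.sqrt ((c+3)^2 + t^2) * Real.sqrt ((c+4)^2 + t^2) := by
          apply mul_le_mul_of_nonneg_left (Real.sqrt_le_sqrt (by nlinarith)) (Real.sqrt_nonneg _)
  have key : c*(c+2) * (1+t^2) ≤ ‖(c:ℂ) + t*I‖ * ‖(c:ℂ) + t*I + 2‖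
      * (‖(c:ℂ) + t*I + 3‖ * ‖(c:ℂ) + t*I + 4‖) := by
    apply mul_le_mul (mul_le_mul A1 A2 (by positivity) (le_trans hc.le A1)) A34 (by positivity)
    exact mul_nonneg (norm_nonneg _) (norm_nonneg _)
  rw [norm_inv, norm_mul, norm_mul, norm_mul]
  calc (‖(c:ℂ) + t*I‖ * ‖(c:ℂ) + t*I + 2‖
        * ‖(c:ℂ) + t*I + 3‖ * ‖(c:ℂ) + t*I + 4‖)⁻¹
      ≤ (c*(c+2) * (1+t^2))⁻¹ := by
        apply inv_anti₀ (by positivity)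
        rw [mul_assoc] at key
        linarith [key]
  _ = (c*(c+2))⁻¹ * (1+t^2)⁻¹ := by rw [mul_inv]
theorem stmt_3 (c : ℝ) (hc : 0 < c) (x : ℝ) (hx : 1 < x) :
    Tendsto (fun T : ℝ => (1 / (2 * Real.pi)) *
        ∫ t in (-T)..T, (x : ℂ) ^ ((c : ℂ) + t * Complex.I) /
          (((c : ℂ) + t * Complex.I) * ((c : ℂ) + t * Complex.I + 2) *
            ((c : ℂ) + t * Complex.I + 3) * ((c : ℂ) + t * Complex.I + 4)))
      atTop
      (nhds ((1 / 24 : ℂ) - 1 / (4 * (x : ℂ) ^ 2) + 1 / (3 * (x : ℂ) ^ 3)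
        - 1 / (8 * (x : ℂ) ^ 4))) := by
  have hx0 : (0:ℝ) < x := by linarith
  have hxC : (x:ℂ) ≠ 0 := by exact_mod_cast ne_of_gt hx0
  set L := Real.log x with hLdef
  have hL0 : 0 < L := Real.log_pos hx
  set g : ℝ → ℂ := fun t => (x : ℂ) ^ ((c : ℂ) + t * Complex.I) /
          (((c : ℂ) + t * Complex.I) * ((c : ℂ) + t * Complex.I + 2) *
            ((c : ℂ) + t * Complex.I + 3) * ((c : ℂ) + t * Complex.I + 4)) with hgdef
  have hcpow_cont : Continuous (fun t : ℝ => (x : ℂ) ^ ((c : ℂ) + t * Complex.I)) :=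
    Continuous.const_cpow (by fun_prop) (Or.inl hxC)
  have hcpow_norm : ∀ t : ℝ, ‖(x : ℂ) ^ ((c : ℂ) + t * Complex.I)‖ = x ^ c := by
    intro t
    rw [Complex.norm_cpow_eq_rpow_re_of_pos hx0]
    congr 1
    simp
  have hgint : Integrable g := by
    refine ((aux_int c hc).bdd_mul hcpow_cont.aestronglyMeasurable
      (Filter.Eventually.of_forall fun t => le_of_eq (hcpow_norm t))).congr
      (Filter.Eventually.of_forall fun t => ?_)
    simp only [hgdef, Pi.mul_apply, div_eq_mul_inv]
  have h1 : Tendsto (fun T : ℝ => ∫ t in (-T)..T, g t) atTop (nhds (∫ t, g t)) :=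
    intervalIntegral_tendsto_integral hgint tendsto_neg_atTop_atBot tendsto_id
  have h2 := h1.const_mul ((1:ℂ) / (2 * (Real.pi : ℂ)))
  -- the key value computation
  have hne : ∀ (t : ℝ) (a : ℝ), 0 ≤ a → ((c:ℂ) + t*I + a) ≠ 0 := by
    intro t a ha
    apply re_ne_zero
    simp
    linarith
  have hFour : 𝓕 (pf c) = fun ξ : ℝ =>
      (((c:ℂ) + (2*π*ξ:ℝ)*I) * ((c:ℂ) + (2*π*ξ:ℝ)*I + 2)
        * ((c:ℂ) + (2*π*ξ:ℝ)*I + 3) * ((c:ℂ) + (2*π*ξ:ℝ)*I + 4))⁻¹ := by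
    funext ξ
    rw [pf_fourier c hc ξ,
      show ((c:ℂ)+2) + ((2*π*ξ:ℝ):ℂ)*I = ((c:ℂ) + (2*π*ξ:ℝ)*I) + 2 by ring,
      show ((c:ℂ)+3) + ((2*π*ξ:ℝ):ℂ)*I = ((c:ℂ) + (2*π*ξ:ℝ)*I) + 3 by ring,
      show ((c:ℂ)+4) + ((2*π*ξ:ℝ):ℂ)*I = ((c:ℂ) + (2*π*ξ:ℝ)*I) + 4 by ring,
      partial_frac _ (by simpa using hne (2*π*ξ) 0 le_rfl) (hne _ 2 (by norm_num))
        (hne _ 3 (by norm_num)) (hne _ 4 (by norm_num))]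
  have hFour_int : Integrable (𝓕 (pf c)) := by
    rw [hFour]
    exact (aux_int c hc).comp_mul_left' (by positivity : (2*π:ℝ) ≠ 0)
  have hinv := (pf_cont c).fourierInv_fourier_eq (pf_integrable c hc) hFour_int
  have hinvL := congrFun hinv L
  rw [Real.fourierInv_eq'] at hinvL
  simp only [RCLike.inner_apply, conj_trivial, smul_eq_mul, mul_comm L] at hinvL
  -- hinvL : ∫ ξ, cexp (↑(2 * π * (ξ * L)) * I) * 𝓕 (pf c) ξ = pf c L
  have hexp : Complex.exp ((L:ℂ)) = (x:ℂ) := by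
    rw [← Complex.ofReal_exp, hLdef, Real.exp_log hx0]
  have hkey : ∀ ξ : ℝ, g (2*π*ξ) =
      Complex.exp ((L*c : ℝ)) * (Complex.exp ((2*π*(ξ*L) : ℝ) * I) * 𝓕 (pf c) ξ) := by
    intro ξ
    rw [hFour]
    simp only [hgdef]
    rw [div_eq_mul_inv, Complex.cpow_def_of_ne_zero hxC, ← Complex.ofReal_log hx0.le,
      ← hLdef, ← mul_assoc, ← Complex.exp_add]
    congr 2
    push_cast
    ring
  have hsub : (∫ ξ : ℝ, g (2*π*ξ)) = |((2*π)⁻¹ : ℝ)| • ∫ t, g t :=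
    MeasureTheory.Measure.integral_comp_mul_left g (2*π)
  have hval : (∫ t, g t) = (2*π : ℝ) • (Complex.exp ((L*c : ℝ)) * pf c L) := by
    have h5 : (∫ ξ : ℝ, g (2*π*ξ)) = Complex.exp ((L*c : ℝ)) * pf c L := by
      rw [← hinvL, ← integral_const_mul]
      exact integral_congr_ae (Filter.Eventually.of_forall hkey)
    rw [h5] at hsub
    rw [abs_of_pos (by positivity)] at hsub
    rw [hsub, smul_smul]
    rw [show (2*π) * (2*π)⁻¹ = (1:ℝ) by field_simp, one_smul]
  -- final value
  have hfinal : ((1:ℂ) / (2 * (Real.pi : ℂ))) * ∫ t, g t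
      = (1 / 24 : ℂ) - 1 / (4 * (x : ℂ) ^ 2) + 1 / (3 * (x : ℂ) ^ 3) - 1 / (8 * (x : ℂ) ^ 4) := by
    rw [hval, real_smul, ← mul_assoc]
    rw [show ((1:ℂ) / (2 * (Real.pi : ℂ))) * (((2*π : ℝ)) : ℂ) = 1 by
      push_cast
      exact one_div_mul_cancel (by simp [Real.pi_ne_zero])]
    rw [one_mul]
    have hpfL : pf c L = pfG c L := by simp [pf, not_le.mpr hL0]
    rw [hpfL]
    simp only [pfG]
    have A0 : Complex.exp (-((c:ℂ) * L)) = (Complex.exp ((L*c : ℝ) : ℂ))⁻¹ := by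
      rw [← Complex.exp_neg]
      congr 1
      push_cast
      ring
    have A2 : Complex.exp (-(((c:ℂ)+2) * L)) = (Complex.exp ((L*c : ℝ) : ℂ))⁻¹ * ((x:ℂ)^2)⁻¹ := by
      rw [show -(((c:ℂ)+2) * (L:ℂ)) = -((L*c : ℝ) : ℂ) + (2:ℕ) * (-(L:ℂ)) by push_cast; ring,
        Complex.exp_add, Complex.exp_neg, Complex.exp_nat_mul, Complex.exp_neg, hexp, inv_pow]
    have A3 : Complex.exp (-(((c:ℂ)+3) * L)) = (Complex.exp ((L*c : ℝ) : ℂ))⁻¹ * ((x:ℂ)^3)⁻¹ := by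
      rw [show -(((c:ℂ)+3) * (L:ℂ)) = -((L*c : ℝ) : ℂ) + (3:ℕ) * (-(L:ℂ)) by push_cast; ring,
        Complex.exp_add, Complex.exp_neg, Complex.exp_nat_mul, Complex.exp_neg, hexp, inv_pow]
    have A4 : Complex.exp (-(((c:ℂ)+4) * L)) = (Complex.exp ((L*c : ℝ) : ℂ))⁻¹ * ((x:ℂ)^4)⁻¹ := by
      rw [show -(((c:ℂ)+4) * (L:ℂ)) = -((L*c : ℝ) : ℂ) + (4:ℕ) * (-(L:ℂ)) by push_cast; ring,
        Complex.exp_add, Complex.exp_neg, Complex.exp_nat_mul, Complex.exp_neg, hexp, inv_pow]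
    rw [A0, A2, A3, A4]
    set X := Complex.exp ((L*c : ℝ) : ℂ) with hX
    have hXne : X ≠ 0 := Complex.exp_ne_zero _
    have expand : (1/24 : ℂ) * X⁻¹ - 1/4 * (X⁻¹ * ((x:ℂ)^2)⁻¹) + 1/3 * (X⁻¹ * ((x:ℂ)^3)⁻¹)
        - 1/8 * (X⁻¹ * ((x:ℂ)^4)⁻¹)
        = X⁻¹ * ((1 / 24 : ℂ) - 1 / (4 * (x:ℂ)^2) + 1 / (3 * (x:ℂ)^3) - 1 / (8 * (x:ℂ)^4)) := by
      ring
    rw [expand, ← mul_assoc, mul_inv_cancel₀ hXne, one_mul]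
  rw [hfinal] at h2
  exact h2
end

section
/- Let $p$ be a prime, $r \in \mathbb{C}$, and $u \in \mathbb{C}$ with $-2 < \mathrm{Re}(u) < 2$. Set $U := p^{-u}$ and define for integers $\alpha \geq 0$: $h(\alpha) := \sum_{j=0}^{\alpha} p^{ju} + (pr - 1)\sum_{j=0}^{\alpha - 1} p^{ju} - pr \sum_{j=0}^{\alpha-2} p^{ju}$ (empty sums being $0$). Then $\sum_{\alpha=0}^\infty \frac{h(\alpha)^2}{p^{\alpha(2+u)}} = \frac{p^2 U (1 + 2r/p + r^2 U)}{p^2 U - 1}$, the series converging absolutely. -/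
open Complex

theorem stmt_10 (p : ℕ) (hp : p.Prime) (r u : ℂ) (hu1 : -2 < u.re) (hu2 : u.re < 2)
    (h : ℕ → ℂ)
    (hh : ∀ α : ℕ, h α = (∑ j ∈ Finset.range (α + 1), (p : ℂ) ^ ((j : ℂ) * u))
      + (p * r - 1) * (∑ j ∈ Finset.range α, (p : ℂ) ^ ((j : ℂ) * u))
      - p * r * (∑ j ∈ Finset.range (α - 1), (p : ℂ) ^ ((j : ℂ) * u))) :
    Summable (fun α : ℕ => (h α) ^ 2 / (p : ℂ) ^ ((α : ℂ) * (2 + u))) ∧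
    ∑' α : ℕ, (h α) ^ 2 / (p : ℂ) ^ ((α : ℂ) * (2 + u))
      = (p : ℂ) ^ 2 * (p : ℂ) ^ (-u) * (1 + 2 * r / p + r ^ 2 * (p : ℂ) ^ (-u)) /
        ((p : ℂ) ^ 2 * (p : ℂ) ^ (-u) - 1) := by
  have hppos : 0 < p := hp.pos
  have hp0 : (p : ℂ) ≠ 0 := Nat.cast_ne_zero.mpr hppos.ne'
  set q : ℂ := (p : ℂ) ^ (u : ℂ) with hqdef
  have hq0 : q ≠ 0 := by
    rw [hqdef, Ne, Complex.cpow_eq_zero_iff]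
    tauto
  set x : ℂ := q / (p : ℂ) ^ 2 with hxdef
  have hnx : ‖x‖ < 1 := by
    rw [hxdef, norm_div, hqdef, Complex.norm_natCast_cpow_of_pos hppos]
    have h2 : ‖((p : ℂ)) ^ 2‖ = (p : ℝ) ^ (2 : ℝ) := by
      rw [norm_pow, Complex.norm_natCast]
      rw [Real.rpow_two]
    rw [h2, div_lt_one (Real.rpow_pos_of_pos (Nat.cast_pos.mpr hppos) _)]
    exact Real.rpow_lt_rpow_left_iff (by exact_mod_cast hp.one_lt) |>.mpr hu2
  have hx1 : x ≠ 1 := by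
    intro hx; rw [hx] at hnx; simp at hnx
  set C : ℂ := (1 + p * r / q) ^ 2 with hCdef
  -- h values
  have hpow : ∀ j : ℕ, (p : ℂ) ^ ((j : ℂ) * u) = q ^ j := fun j =>
    Complex.cpow_nat_mul _ j u
  have hterm : ∀ α : ℕ, (h α) ^ 2 / (p : ℂ) ^ ((α : ℂ) * (2 + u))
      = (if α = 0 then 1 - C else 0) + C * x ^ α := by
    intro α
    match α with
    | 0 =>
      rw [hh 0]
      simp [hpow 0]
    | Nat.succ β =>
      have hhb : h (β + 1) = q ^ (β + 1) + p * r * q ^ β := by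
        rw [hh (β + 1)]
        simp only [hpow, Nat.add_sub_cancel, Finset.sum_range_succ]
        ring
      have hden : (p : ℂ) ^ (((β + 1 : ℕ) : ℂ) * (2 + u)) = ((p : ℂ) ^ 2 * q) ^ (β + 1) := by
        rw [Complex.cpow_nat_mul]
        congr 1
        rw [Complex.cpow_add _ _ hp0, hqdef]
        norm_num [Complex.cpow_natCast]
      rw [hhb, hden]
      simp only [Nat.succ_ne_zero, if_false, zero_add, hCdef, hxdef]
      simp only [Nat.succ_eq_add_one, div_pow]
      field_simp
      ring

  have hfun : (fun α : ℕ => (h α) ^ 2 / (p : ℂ) ^ ((α : ℂ) * (2 + u)))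
      = fun α => (if α = 0 then 1 - C else 0) + C * x ^ α := funext hterm
  have hs1 : Summable (fun α : ℕ => if α = 0 then 1 - C else (0:ℂ)) :=
    summable_of_ne_finset_zero (s := {0}) (by intro b hb; simp at hb; simp [hb])
  have hs2 : Summable (fun α : ℕ => C * x ^ α) :=
    (summable_geometric_of_norm_lt_one hnx).mul_left C
  have hsum : Summable (fun α : ℕ => (h α) ^ 2 / (p : ℂ) ^ ((α : ℂ) * (2 + u))) := by
    rw [hfun]; exact hs1.add hs2
  refine ⟨hsum, ?_⟩
  rw [hfun, Summable.tsum_add hs1 hs2, tsum_mul_left, tsum_geometric_of_norm_lt_one hnx,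
    tsum_eq_sum (s := {0}) (by intro b hb; simp at hb; simp [hb])]
  simp only [Finset.sum_singleton, if_pos rfl]
  have hU : (p : ℂ) ^ (-u) = q⁻¹ := by rw [hqdef, Complex.cpow_neg]
  rw [hU]
  have h1x : (1 : ℂ) - x ≠ 0 := sub_ne_zero.mpr (Ne.symm hx1)
  have hpq : (p : ℂ) ^ 2 - q ≠ 0 := by
    intro hc
    apply h1x
    have hq2 : q = (p:ℂ)^2 := (sub_eq_zero.mp hc).symm
    show (1:ℂ) - q / (p:ℂ)^2 = 0
    rw [hq2, div_self (pow_ne_zero 2 hp0), sub_self]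
  have e0 : (1:ℂ) - x = ((p:ℂ)^2 - q) / (p:ℂ)^2 := by
    rw [hxdef]; field_simp
  have e2 : (p:ℂ)^2 * q⁻¹ - 1 = ((p:ℂ)^2 - q) / q := by
    field_simp
  rw [e0, e2, inv_div, hCdef, div_div_eq_mul_div]
  simp only [if_true]
  field_simp
  ring
end

section
/- Let $d \geq 1$, let $a \in \{0, 1\}$, and let $n, m$ be integers coprime to $d$. Then $2 \sum_{\chi} \chi(n)\overline{\chi}(m) = \sum_{k \mid d,\ n \equiv m (k)} \phi(k)\mu(d/k) + (-1)^a \sum_{k \mid d,\ n \equiv -m (k)} \phi(k)\mu(d/k)$, where the first sum on the left runs over the primitive Dirichlet characters $\chi$ modulo $d$ with $\chi(-1) = (-1)^a$. -/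
open Complex
open scoped Classical

section Aux
open DirichletCharacter

lemma isUnit_intCast_zmod {x : ℤ} {k : ℕ} (h : Int.gcd x k = 1) : IsUnit ((x : ZMod k)) := by
  obtain ⟨u, v, huv⟩ := Int.isCoprime_iff_gcd_eq_one.mpr h
  have h2 : (u : ZMod k) * (x : ZMod k) = 1 := by
    have := congrArg (fun z : ℤ => (z : ZMod k)) huv
    push_cast at this
    simpa [ZMod.natCast_self] using this
  exact IsUnit.of_mul_eq_one _ ((mul_comm _ _).trans h2)

lemma factorsThrough_gcd {n : ℕ} [NeZero n] (χ : DirichletCharacter ℂ n) {a b : ℕ}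
    (ha : a ∣ n) (hb : b ∣ n) (hA : χ.FactorsThrough a) (hB : χ.FactorsThrough b) :
    χ.FactorsThrough (Nat.gcd a b) := by
  have hg : Nat.gcd a b ∣ n := (Nat.gcd_dvd_left a b).trans ha
  rw [factorsThrough_iff_ker_unitsMap hg]
  rw [factorsThrough_iff_ker_unitsMap ha] at hA
  rw [factorsThrough_iff_ker_unitsMap hb] at hB
  intro u hu
  rw [MonoidHom.mem_ker] at hu
  -- the integer representative
  set x : ℤ := ((u : ZMod n).val : ℤ) with hx
  have hxu : ((x : ZMod n)) = (u : ZMod n) := by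
    simp [hx, ZMod.natCast_val, ZMod.intCast_cast]
  -- x ≡ 1 mod gcd a b
  have hg1 : ((Nat.gcd a b : ℤ)) ∣ x - 1 := by
    rw [← ZMod.intCast_zmod_eq_zero_iff_dvd]
    push_cast
    have : ((x : ZMod (Nat.gcd a b))) = 1 := by
      have h1 : (ZMod.unitsMap hg u : ZMod (Nat.gcd a b)) = 1 := by rw [hu]; rfl
      rw [ZMod.unitsMap_def] at h1
      simp only [Units.coe_map, MonoidHom.coe_coe] at h1
      rw [← h1, hx]
      push_cast
      rw [ZMod.natCast_val, ZMod.castHom_apply]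
    rw [this]; ring
  obtain ⟨t, ht⟩ := hg1
  have hbez : ((Nat.gcd a b : ℤ)) = (a : ℤ) * Int.gcdA a b + (b : ℤ) * Int.gcdB a b := by
    have := Int.gcd_eq_gcd_ab (a : ℤ) (b : ℤ)
    simpa [Int.gcd_natCast_natCast] using this
  set v₀ : ℤ := 1 + (a : ℤ) * (Int.gcdA a b * t) with hv₀
  have hxv : x - v₀ = (b : ℤ) * (Int.gcdB a b * t) := by
    have : x - 1 = ((a : ℤ) * Int.gcdA a b + (b : ℤ) * Int.gcdB a b) * t := by
      rw [← hbez]; exact ht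
    rw [hv₀]; linarith [this]
  have hva : ((v₀ : ZMod a)) = 1 := by
    rw [hv₀]; push_cast; simp [ZMod.natCast_self]
  have hvb : ((v₀ : ZMod b)) = ((x : ZMod b)) := by
    have : ((x - v₀ : ℤ) : ZMod b) = 0 := by
      rw [hxv]; push_cast; simp [ZMod.natCast_self]
    push_cast at this
    linear_combination -this
  have hcopx : IsCoprime x ((n : ℕ) : ℤ) := by
    rw [hx, Nat.isCoprime_iff_coprime]
    exact ZMod.val_coe_unit_coprime u
  have hcopa : IsCoprime v₀ ((a : ℕ) : ℤ) := by
    rw [hv₀]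
    exact IsCoprime.add_mul_left_left isCoprime_one_left _
  have hcopb : IsCoprime v₀ ((b : ℕ) : ℤ) := by
    have h1 : IsCoprime x ((b : ℕ) : ℤ) :=
      hcopx.of_isCoprime_of_dvd_right (Int.natCast_dvd_natCast.mpr hb)
    have : v₀ = x + (b : ℤ) * (-(Int.gcdB a b * t)) := by linarith [hxv]
    rw [this]
    exact IsCoprime.add_mul_left_left h1 _
  have hcopl : IsCoprime v₀ ((Nat.lcm a b : ℕ) : ℤ) := by
    refine (hcopa.mul_right hcopb).of_isCoprime_of_dvd_right ?_
    exact_mod_cast Int.natCast_dvd_natCast.mpr (Nat.lcm_dvd_mul a b)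
  obtain ⟨w, hw⟩ := isUnit_intCast_zmod (Int.isCoprime_iff_gcd_eq_one.mp hcopl)
  have hl : Nat.lcm a b ∣ n := Nat.lcm_dvd ha hb
  obtain ⟨v, hv⟩ := ZMod.unitsMap_surjective hl w
  have hcomp : ∀ (c : ℕ) (hc : c ∣ Nat.lcm a b) (hcn : c ∣ n),
      ((ZMod.unitsMap hcn v : ZMod c)) = ((v₀ : ZMod c)) := by
    intro c hc hcn
    have h1 : ZMod.unitsMap hcn v = ZMod.unitsMap hc (ZMod.unitsMap hl v) := by
      rw [← MonoidHom.comp_apply, ZMod.unitsMap_comp]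
    rw [h1, hv, ZMod.unitsMap_def]
    simp only [Units.coe_map, MonoidHom.coe_coe]
    rw [hw]
    exact map_intCast (ZMod.castHom hc (ZMod c)) v₀
  have hker_a : v ∈ (ZMod.unitsMap ha).ker := by
    rw [MonoidHom.mem_ker]
    ext
    rw [hcomp a (Nat.dvd_lcm_left a b) ha, hva]
    rfl
  have hker_b : v⁻¹ * u ∈ (ZMod.unitsMap hb).ker := by
    rw [MonoidHom.mem_ker, map_mul, map_inv]
    have h1 : ZMod.unitsMap hb v = ZMod.unitsMap hb u := by
      ext
      rw [hcomp b (Nat.dvd_lcm_right a b) hb, hvb]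
      rw [ZMod.unitsMap_def]
      simp only [Units.coe_map, MonoidHom.coe_coe]
      rw [← hxu]
      exact (map_intCast (ZMod.castHom hb (ZMod b)) x).symm
    rw [h1, inv_mul_cancel]
  rw [MonoidHom.mem_ker]
  have : u = v * (v⁻¹ * u) := by group
  rw [this, map_mul, hA hker_a, hB hker_b, one_mul]

lemma conductor_dvd_of_factorsThrough {n : ℕ} [NeZero n] (χ : DirichletCharacter ℂ n)
    {k : ℕ} (hk : χ.FactorsThrough k) : χ.conductor ∣ k := by
  have hkd : k ∣ n := hk.dvd
  have hFT : χ.FactorsThrough (Nat.gcd χ.conductor k) :=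
    factorsThrough_gcd χ (conductor_dvd_level χ) hkd (factorsThrough_conductor χ) hk
  have h1 : χ.conductor ≤ Nat.gcd χ.conductor k := Nat.sInf_le hFT
  have h2 : Nat.gcd χ.conductor k ∣ χ.conductor := Nat.gcd_dvd_left _ _
  have h0 : χ.conductor ≠ 0 := conductor_ne_zero χ
  have : Nat.gcd χ.conductor k = χ.conductor :=
    Nat.le_antisymm (Nat.le_of_dvd (Nat.pos_of_ne_zero h0) h2) h1
  rw [← this]
  exact Nat.gcd_dvd_right _ _

lemma factorsThrough_of_conductor_dvd {n : ℕ} (χ : DirichletCharacter ℂ n)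
    {k : ℕ} (hk : k ∣ n) (h : χ.conductor ∣ k) : χ.FactorsThrough k := by
  obtain ⟨hcd, χ₀, hχ₀⟩ := factorsThrough_conductor χ
  refine ⟨hk, changeLevel h χ₀, ?_⟩
  exact hχ₀.trans (changeLevel_trans χ₀ h hk)

lemma sum_moebius_divisors (e : ℕ) :
    (∑ k ∈ e.divisors, ArithmeticFunction.moebius k) = if e = 1 then 1 else 0 := by
  rcases eq_or_ne e 0 with rfl | he
  · simp
  have h := congrArg (fun f : ArithmeticFunction ℤ => f e) ArithmeticFunction.moebius_mul_coe_zeta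
  simp only [ArithmeticFunction.mul_apply, ArithmeticFunction.one_apply] at h
  rw [← h, Nat.sum_divisorsAntidiagonal (fun i j => ArithmeticFunction.moebius i *
    (↑ArithmeticFunction.zeta : ArithmeticFunction ℤ) j)]
  refine Finset.sum_congr rfl fun k hk => ?_
  have hk0 : e / k ≠ 0 := Nat.ne_of_gt (Nat.div_pos
    (Nat.le_of_dvd (Nat.pos_of_ne_zero he) (Nat.mem_divisors.mp hk).1)
    (Nat.pos_of_mem_divisors hk))
  rw [ArithmeticFunction.natCoe_apply, ArithmeticFunction.zeta_apply_ne hk0]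
  simp


lemma moebius_indicator {d : ℕ} (hd : d ≠ 0) {c : ℕ} (hc : c ∣ d) :
    (∑ k ∈ d.divisors, if c ∣ k then ArithmeticFunction.moebius (d / k) else 0)
      = if c = d then 1 else 0 := by
  have h1 := Nat.sum_div_divisors d (fun k => if c ∣ k then ArithmeticFunction.moebius (d / k) else 0)
  rw [← h1]
  have h2 : ∀ k ∈ d.divisors,
      (if c ∣ d / k then ArithmeticFunction.moebius (d / (d / k)) else 0)
        = (if k ∣ d / c then ArithmeticFunction.moebius k else 0) := by
    intro k hk
    obtain ⟨hkd, -⟩ := Nat.mem_divisors.mp hk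
    have hdd : d / (d / k) = k := Nat.div_div_self hkd hd
    have hiff : c ∣ d / k ↔ k ∣ d / c := by
      rw [Nat.dvd_div_iff_mul_dvd hkd, Nat.dvd_div_iff_mul_dvd hc, mul_comm]
    rw [hdd]
    exact if_congr hiff rfl rfl
  rw [Finset.sum_congr rfl h2, ← Finset.sum_filter,
    Nat.divisors_filter_dvd_of_dvd hd (Nat.div_dvd_of_dvd hc), sum_moebius_divisors]
  have : d / c = 1 ↔ c = d := by
    constructor
    · intro h
      have := Nat.div_mul_cancel hc
      rw [h, one_mul] at this
      exact this
    · rintro rfl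
      exact Nat.div_self (Nat.pos_of_ne_zero hd)
  exact if_congr this rfl rfl

lemma changeLevel_intCast {d k : ℕ} (hk : k ∣ d) (ψ : DirichletCharacter ℂ k) (x : ℤ)
    (hx : IsUnit ((x : ZMod d))) :
    (changeLevel hk ψ) ((x : ZMod d)) = ψ ((x : ZMod k)) := by
  obtain ⟨u, hu⟩ := hx
  rw [← hu, changeLevel_eq_cast_of_dvd]
  congr 1
  rw [hu]
  exact (ZMod.castHom_apply (h := hk) ((x : ZMod d))).symm.trans
    (map_intCast (ZMod.castHom hk (ZMod k)) x)

lemma sum_FT {d : ℕ} [NeZero d] {k : ℕ} (hk : k ∣ d) (x y : ℤ)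
    (hx : IsUnit ((x : ZMod d))) (hy : IsUnit ((y : ZMod d))) :
    (∑ χ : DirichletCharacter ℂ d,
      if χ.FactorsThrough k then χ ((x : ZMod d)) * (starRingEnd ℂ) (χ ((y : ZMod d))) else 0)
      = ∑ ψ : DirichletCharacter ℂ k, ψ ((x : ZMod k)) * (starRingEnd ℂ) (ψ ((y : ZMod k))) := by
  rw [← Finset.sum_filter]
  refine Finset.sum_bij (fun ψ _ => changeLevel hk ψ) ?_ ?_ ?_ ?_ |>.symm
  · intro ψ _
    simp only [Finset.mem_filter, Finset.mem_univ, true_and]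
    exact changeLevel_factorsThrough ψ hk
  · intro ψ₁ _ ψ₂ _ h
    exact changeLevel_injective hk h
  · intro χ hχ
    obtain ⟨-, hd2, ψ, hψ⟩ := Finset.mem_filter.mp hχ
    exact ⟨ψ, Finset.mem_univ _, hψ.symm⟩
  · intro ψ _
    rw [changeLevel_intCast hk ψ x hx, changeLevel_intCast hk ψ y hy]

lemma sum_orth {k : ℕ} [NeZero k] (x y : ZMod k) (hy : IsUnit y) :
    (∑ ψ : DirichletCharacter ℂ k, ψ x * (starRingEnd ℂ) (ψ y))
      = if x = y then (k.totient : ℂ) else 0 := by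
  have h := DirichletCharacter.sum_char_inv_mul_char_eq ℂ (a := y) hy x
  have hterm : ∀ ψ : DirichletCharacter ℂ k,
      ψ x * (starRingEnd ℂ) (ψ y) = ψ y⁻¹ * ψ x := by
    intro ψ
    have h1 : (starRingEnd ℂ) (ψ y) = ψ⁻¹ y := MulChar.star_apply' ψ y
    have h2 : ψ y⁻¹ = (ψ y)⁻¹ := by
      have h3 : ψ y⁻¹ * ψ y = 1 := by
        rw [← map_mul, ZMod.inv_mul_of_unit y hy, map_one]
      have h4 : ψ y ≠ 0 := by
        intro h0
        rw [h0, mul_zero] at h3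
        exact one_ne_zero h3.symm
      field_simp at h3 ⊢
      linear_combination h3
    rw [h1, MulChar.inv_apply_eq_inv', h2, mul_comm]
  rw [Finset.sum_congr rfl (fun ψ _ => hterm ψ), h]
  exact if_congr eq_comm rfl rfl

lemma primitive_sum {d : ℕ} [NeZero d] (x m : ℤ)
    (hx : IsUnit ((x : ZMod d))) (hm : IsUnit ((m : ZMod d))) :
    (∑ χ : DirichletCharacter ℂ d,
        if χ.IsPrimitive then χ ((x : ZMod d)) * (starRingEnd ℂ) (χ ((m : ZMod d))) else 0)
      = ∑ k ∈ d.divisors, if ((x : ZMod k)) = ((m : ZMod k))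
          then (Nat.totient k : ℂ) * ((ArithmeticFunction.moebius (d / k) : ℤ) : ℂ) else 0 := by
  have step1 : ∀ χ : DirichletCharacter ℂ d,
      (if χ.IsPrimitive then χ ((x : ZMod d)) * (starRingEnd ℂ) (χ ((m : ZMod d))) else 0)
        = ∑ k ∈ d.divisors, ((ArithmeticFunction.moebius (d / k) : ℤ) : ℂ) *
            (if χ.FactorsThrough k then χ ((x : ZMod d)) * (starRingEnd ℂ) (χ ((m : ZMod d))) else 0) := by
    intro χ
    have hiff : ∀ k ∈ d.divisors, (χ.FactorsThrough k ↔ χ.conductor ∣ k) := by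
      intro k hk
      exact ⟨fun h => conductor_dvd_of_factorsThrough χ h,
        fun h => factorsThrough_of_conductor_dvd χ (Nat.mem_divisors.mp hk).1 h⟩
    have hmb := moebius_indicator (NeZero.ne d) (conductor_dvd_level χ)
    have hmbC : (∑ k ∈ d.divisors, if χ.FactorsThrough k
        then ((ArithmeticFunction.moebius (d / k) : ℤ) : ℂ) else 0)
        = if χ.IsPrimitive then 1 else 0 := by
      have := congrArg (fun z : ℤ => (z : ℂ)) hmb
      push_cast at this
      rw [show (if χ.IsPrimitive then (1:ℂ) else 0) = (if χ.conductor = d then (1:ℂ) else 0)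
        from if_congr (isPrimitive_def χ) rfl rfl, ← this]
      exact Finset.sum_congr rfl fun k hk => if_congr (hiff k hk) rfl rfl
    calc (if χ.IsPrimitive then χ ((x : ZMod d)) * (starRingEnd ℂ) (χ ((m : ZMod d))) else 0)
        = (if χ.IsPrimitive then (1:ℂ) else 0) * (χ ((x : ZMod d)) * (starRingEnd ℂ) (χ ((m : ZMod d)))) := by
          split_ifs <;> simp
      _ = (∑ k ∈ d.divisors, if χ.FactorsThrough k
            then ((ArithmeticFunction.moebius (d / k) : ℤ) : ℂ) else 0) *
            (χ ((x : ZMod d)) * (starRingEnd ℂ) (χ ((m : ZMod d)))) := by rw [hmbC]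
      _ = _ := by
          rw [Finset.sum_mul]
          refine Finset.sum_congr rfl fun k hk => ?_
          split_ifs <;> ring
  rw [Finset.sum_congr rfl fun χ _ => step1 χ, Finset.sum_comm]
  refine Finset.sum_congr rfl fun k hk => ?_
  obtain ⟨hkd, -⟩ := Nat.mem_divisors.mp hk
  haveI : NeZero k := ⟨Nat.pos_of_mem_divisors hk |>.ne'⟩
  rw [← Finset.mul_sum]
  have hmk : IsUnit ((m : ZMod k)) := by
    have := hm.map (ZMod.castHom hkd (ZMod k))
    rwa [map_intCast] at this
  rw [sum_FT hkd x m hx hm, sum_orth ((x : ZMod k)) ((m : ZMod k)) hmk]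
  split_ifs <;> ring

end Aux

theorem stmt_12 (d : ℕ) (hd : 1 ≤ d) (a : ℕ) (ha : a ≤ 1) (n m : ℤ)
    (hn : Int.gcd n d = 1) (hm : Int.gcd m d = 1) :
    2 * ∑ χ : DirichletCharacter ℂ d,
        (if χ.IsPrimitive ∧ χ (-1) = (-1) ^ a
          then χ (n : ZMod d) * (starRingEnd ℂ) (χ (m : ZMod d)) else 0)
      = (∑ k ∈ d.divisors, (if (n : ZMod k) = (m : ZMod k)
            then (Nat.totient k : ℂ) * ((ArithmeticFunction.moebius (d / k) : ℤ) : ℂ)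
            else 0))
        + (-1) ^ a * (∑ k ∈ d.divisors, (if (n : ZMod k) = (-(m : ZMod k))
            then (Nat.totient k : ℂ) * ((ArithmeticFunction.moebius (d / k) : ℤ) : ℂ)
            else 0)) := by
  haveI : NeZero d := ⟨by omega⟩
  have hnu : IsUnit ((n : ZMod d)) := isUnit_intCast_zmod hn
  have hmu : IsUnit ((m : ZMod d)) := isUnit_intCast_zmod hm
  have hnnu : IsUnit (((-n : ℤ) : ZMod d)) := by push_cast; exact hnu.neg
  have key : ∀ χ : DirichletCharacter ℂ d,
      2 * (if χ.IsPrimitive ∧ χ (-1) = (-1) ^ a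
            then χ ((n : ZMod d)) * (starRingEnd ℂ) (χ ((m : ZMod d))) else 0)
        = (if χ.IsPrimitive then χ ((n : ZMod d)) * (starRingEnd ℂ) (χ ((m : ZMod d))) else 0)
          + (-1 : ℂ) ^ a * (if χ.IsPrimitive
              then χ (((-n : ℤ) : ZMod d)) * (starRingEnd ℂ) (χ ((m : ZMod d))) else 0) := by
    intro χ
    by_cases hP : χ.IsPrimitive
    · have hneg : χ (((-n : ℤ) : ZMod d)) = χ (-1) * χ ((n : ZMod d)) := by
        have h1 : (((-n : ℤ) : ZMod d)) = (-1 : ZMod d) * ((n : ZMod d)) := by push_cast; ring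
        rw [h1, map_mul]
      rw [if_pos hP, if_pos hP, hneg]
      rcases χ.even_or_odd with hpar | hpar <;> rw [hpar] <;> interval_cases a
      · rw [if_pos ⟨hP, by norm_num⟩]; ring
      · rw [if_neg (by norm_num)]; ring
      · rw [if_neg (by rintro ⟨-, h⟩; norm_num at h)]; ring
      · rw [if_pos ⟨hP, by norm_num⟩]; ring
    · rw [if_neg hP, if_neg hP, if_neg (fun h => hP h.1)]
      ring
  rw [Finset.mul_sum, Finset.sum_congr rfl fun χ _ => key χ, Finset.sum_add_distrib,
    ← Finset.mul_sum, primitive_sum n m hnu hmu, primitive_sum (-n) m hnnu hmu]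
  congr 1
  congr 1
  refine Finset.sum_congr rfl fun k hk => ?_
  refine if_congr ?_ rfl rfl
  constructor
  · intro h
    rw [← neg_eq_iff_eq_neg, ← h]
    push_cast
    ring
  · intro h
    push_cast
    rw [h]
    ring
end

section
/- Let $0 < \varepsilon < 1/2$ and let $g : \mathbb{N} \to \mathbb{C}$ satisfy $|g(n)| \leq n^{\varepsilon - 1}$ for all $n \geq 1$. Then there is a constant $C(\varepsilon)$ such that for all real $X \geq 2$: $\sum_{D, D' \geq 1,\ \mathrm{lcm}(D,D') > X} \frac{|g(D)|\,|g(D')|}{\mathrm{lcm}(D, D')} \leq C(\varepsilon)\, X^{2\varepsilon - 1}$. -/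
open Complex

lemma rpow_calc (ε e a b : ℝ) (he : 0 < e) (ha : 0 < a) (hb : 0 < b) :
    (e * a) ^ (ε - 1) * (e * b) ^ (ε - 1) * (e * a * b) ^ (-(2 * ε)) =
      e ^ (-2 : ℝ) * (a ^ (-(1 + ε)) * b ^ (-(1 + ε))) := by
  rw [Real.mul_rpow he.le ha.le, Real.mul_rpow he.le hb.le,
    Real.mul_rpow (mul_pos he ha).le hb.le, Real.mul_rpow he.le ha.le,
    show (-2 : ℝ) = (ε - 1) + (ε - 1) + (-(2 * ε)) by ring,
    show -(1 + ε) = (ε - 1) + (-(2 * ε)) by ring,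
    Real.rpow_add he, Real.rpow_add he, Real.rpow_add ha, Real.rpow_add hb]
  ring

theorem stmt_14 (ε : ℝ) (hε1 : 0 < ε) (hε2 : ε < 1 / 2) (g : ℕ → ℂ)
    (hg : ∀ n : ℕ, 1 ≤ n → ‖g n‖ ≤ (n : ℝ) ^ (ε - 1)) :
    ∃ C : ℝ, ∀ X : ℝ, 2 ≤ X →
      ∑' p : {p : ℕ × ℕ // 0 < p.1 ∧ 0 < p.2 ∧ X < Nat.lcm p.1 p.2},
          ‖g (p : ℕ × ℕ).1‖ * ‖g (p : ℕ × ℕ).2‖ /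
            (Nat.lcm (p : ℕ × ℕ).1 (p : ℕ × ℕ).2 : ℝ)
        ≤ C * X ^ (2 * ε - 1) := by
  -- the dominating summable function on triples
  set G : ℕ × ℕ × ℕ → ℝ := fun t =>
    (t.1 : ℝ) ^ (-2 : ℝ) * ((t.2.1 : ℝ) ^ (-(1 + ε)) * (t.2.2 : ℝ) ^ (-(1 + ε))) with hGdef
  have hGnonneg : ∀ t, 0 ≤ G t := fun t =>
    mul_nonneg (Real.rpow_nonneg (Nat.cast_nonneg _) _)
      (mul_nonneg (Real.rpow_nonneg (Nat.cast_nonneg _) _)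
        (Real.rpow_nonneg (Nat.cast_nonneg _) _))
  have h2 : Summable (fun n : ℕ => (n : ℝ) ^ (-2 : ℝ)) :=
    Real.summable_nat_rpow.mpr (by norm_num)
  have h1 : Summable (fun n : ℕ => (n : ℝ) ^ (-(1 + ε))) :=
    Real.summable_nat_rpow.mpr (by linarith)
  have hGsum : Summable G := by
    have := h2.mul_of_nonneg
      (h1.mul_of_nonneg h1 (fun n => Real.rpow_nonneg (Nat.cast_nonneg _) _)
        (fun n => Real.rpow_nonneg (Nat.cast_nonneg _) _))
      (fun n => Real.rpow_nonneg (Nat.cast_nonneg _) _)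
      (fun q => mul_nonneg (Real.rpow_nonneg (Nat.cast_nonneg _) _)
        (Real.rpow_nonneg (Nat.cast_nonneg _) _))
    exact this
  refine ⟨∑' t, G t, ?_⟩
  intro X hX
  have hXpos : (0 : ℝ) < X := by linarith
  have hXrpos : (0 : ℝ) < X ^ (2 * ε - 1) := Real.rpow_pos_of_pos hXpos _
  set S := {p : ℕ × ℕ // 0 < p.1 ∧ 0 < p.2 ∧ X < Nat.lcm p.1 p.2}
  set ι : S → ℕ × ℕ × ℕ := fun p =>
    (Nat.gcd (p : ℕ × ℕ).1 (p : ℕ × ℕ).2,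
      (p : ℕ × ℕ).1 / Nat.gcd (p : ℕ × ℕ).1 (p : ℕ × ℕ).2,
      (p : ℕ × ℕ).2 / Nat.gcd (p : ℕ × ℕ).1 (p : ℕ × ℕ).2) with hιdef
  have hrec1 : ∀ p : S, (p : ℕ × ℕ).1 = (ι p).1 * (ι p).2.1 := fun p =>
    (Nat.mul_div_cancel' (Nat.gcd_dvd_left _ _)).symm
  have hrec2 : ∀ p : S, (p : ℕ × ℕ).2 = (ι p).1 * (ι p).2.2 := fun p =>
    (Nat.mul_div_cancel' (Nat.gcd_dvd_right _ _)).symm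
  have hι : Function.Injective ι := by
    intro p q h
    have h1' : (ι p).1 = (ι q).1 := by rw [h]
    have h2' : (ι p).2.1 = (ι q).2.1 := by rw [h]
    have h3' : (ι p).2.2 = (ι q).2.2 := by rw [h]
    have : (p : ℕ × ℕ) = (q : ℕ × ℕ) := by
      apply Prod.ext
      · rw [hrec1 p, hrec1 q, h1', h2']
      · rw [hrec2 p, hrec2 q, h1', h3']
    exact Subtype.ext this
  -- positivity facts for a given p
  have key : ∀ p : S,
      ‖g (p : ℕ × ℕ).1‖ * ‖g (p : ℕ × ℕ).2‖ /
          (Nat.lcm (p : ℕ × ℕ).1 (p : ℕ × ℕ).2 : ℝ)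
        ≤ X ^ (2 * ε - 1) * G (ι p) := by
    intro p
    obtain ⟨hD, hD', hL⟩ := p.2
    set D := (p : ℕ × ℕ).1
    set D' := (p : ℕ × ℕ).2
    set e := Nat.gcd D D'
    have he : 0 < e := Nat.gcd_pos_of_pos_left _ hD
    have ha : 0 < D / e := Nat.div_pos (Nat.le_of_dvd hD (Nat.gcd_dvd_left _ _)) he
    have hb : 0 < D' / e := Nat.div_pos (Nat.le_of_dvd hD' (Nat.gcd_dvd_right _ _)) he
    have hLpos : 0 < Nat.lcm D D' := Nat.pos_of_ne_zero (Nat.lcm_ne_zero hD.ne' hD'.ne')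
    have hLX : X ≤ (Nat.lcm D D' : ℝ) := le_of_lt hL
    have hLcast : (0 : ℝ) < (Nat.lcm D D' : ℝ) := by exact_mod_cast hLpos
    -- lcm = e * (D/e) * (D'/e)
    have hlcm : Nat.lcm D D' = e * (D / e) * (D' / e) := by
      have h0 : e * Nat.lcm D D' = D * D' := Nat.gcd_mul_lcm D D'
      have : e * (e * (D / e) * (D' / e)) = e * Nat.lcm D D' := by
        rw [h0]
        calc e * (e * (D / e) * (D' / e)) = (e * (D / e)) * (e * (D' / e)) := by ring
        _ = D * D' := by rw [← hrec1 p, ← hrec2 p]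
      exact (Nat.eq_of_mul_eq_mul_left he this.symm)
    -- bound the numerator
    have hnum : ‖g D‖ * ‖g D'‖ ≤ (D : ℝ) ^ (ε - 1) * (D' : ℝ) ^ (ε - 1) :=
      mul_le_mul (hg D hD) (hg D' hD') (norm_nonneg _)
        (Real.rpow_nonneg (Nat.cast_nonneg _) _)
    have step1 : ‖g D‖ * ‖g D'‖ / (Nat.lcm D D' : ℝ)
        ≤ (D : ℝ) ^ (ε - 1) * (D' : ℝ) ^ (ε - 1) / (Nat.lcm D D' : ℝ) := by
      exact div_le_div_of_nonneg_right hnum hLcast.le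
    -- 1/L ≤ X^(2ε-1) * L^(-2ε)
    have hinv : ((Nat.lcm D D' : ℝ))⁻¹ ≤ X ^ (2 * ε - 1) * (Nat.lcm D D' : ℝ) ^ (-(2 * ε)) := by
      have : ((Nat.lcm D D' : ℝ))⁻¹ = (Nat.lcm D D' : ℝ) ^ (2 * ε - 1) * (Nat.lcm D D' : ℝ) ^ (-(2 * ε)) := by
        rw [← Real.rpow_add hLcast, show (2 * ε - 1) + (-(2 * ε)) = -1 by ring,
          Real.rpow_neg_one]
      rw [this]
      apply mul_le_mul_of_nonneg_right _ (Real.rpow_nonneg hLcast.le _)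
      exact Real.rpow_le_rpow_of_nonpos hXpos hLX (by linarith)
    have step2 : (D : ℝ) ^ (ε - 1) * (D' : ℝ) ^ (ε - 1) / (Nat.lcm D D' : ℝ)
        ≤ X ^ (2 * ε - 1) * ((D : ℝ) ^ (ε - 1) * (D' : ℝ) ^ (ε - 1) * (Nat.lcm D D' : ℝ) ^ (-(2 * ε))) := by
      rw [div_eq_mul_inv]
      calc (D : ℝ) ^ (ε - 1) * (D' : ℝ) ^ (ε - 1) * ((Nat.lcm D D' : ℝ))⁻¹
          ≤ (D : ℝ) ^ (ε - 1) * (D' : ℝ) ^ (ε - 1) *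
            (X ^ (2 * ε - 1) * (Nat.lcm D D' : ℝ) ^ (-(2 * ε))) := by
            apply mul_le_mul_of_nonneg_left hinv
            exact mul_nonneg (Real.rpow_nonneg (Nat.cast_nonneg _) _)
              (Real.rpow_nonneg (Nat.cast_nonneg _) _)
        _ = X ^ (2 * ε - 1) * ((D : ℝ) ^ (ε - 1) * (D' : ℝ) ^ (ε - 1) * (Nat.lcm D D' : ℝ) ^ (-(2 * ε))) := by
            ring
    -- identify with G (ι p)
    have hid : (D : ℝ) ^ (ε - 1) * (D' : ℝ) ^ (ε - 1) * (Nat.lcm D D' : ℝ) ^ (-(2 * ε)) = G (ι p) := by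
      have hD1 : (D : ℝ) = (e : ℝ) * ((D / e : ℕ) : ℝ) := by
        rw [← Nat.cast_mul, Nat.mul_div_cancel' (Nat.gcd_dvd_left D D')]
      have hD2 : (D' : ℝ) = (e : ℝ) * ((D' / e : ℕ) : ℝ) := by
        rw [← Nat.cast_mul, Nat.mul_div_cancel' (Nat.gcd_dvd_right D D')]
      have hL2 : (Nat.lcm D D' : ℝ) = (e : ℝ) * ((D / e : ℕ) : ℝ) * ((D' / e : ℕ) : ℝ) := by
        rw [hlcm]; push_cast; ring
      rw [hD1, hD2, hL2]
      exact rpow_calc ε _ _ _ (by exact_mod_cast he) (by exact_mod_cast ha) (by exact_mod_cast hb)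
    calc ‖g D‖ * ‖g D'‖ / (Nat.lcm D D' : ℝ)
        ≤ (D : ℝ) ^ (ε - 1) * (D' : ℝ) ^ (ε - 1) / (Nat.lcm D D' : ℝ) := step1
      _ ≤ X ^ (2 * ε - 1) * ((D : ℝ) ^ (ε - 1) * (D' : ℝ) ^ (ε - 1) * (Nat.lcm D D' : ℝ) ^ (-(2 * ε))) := step2
      _ = X ^ (2 * ε - 1) * G (ι p) := by rw [hid]
  -- summability of the dominating function on S
  have hGιsum : Summable (G ∘ ι) := hGsum.comp_injective hι
  have hdom : Summable (fun p : S => X ^ (2 * ε - 1) * G (ι p)) := hGιsum.mul_left _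
  have hFnonneg : ∀ p : S, 0 ≤ ‖g (p : ℕ × ℕ).1‖ * ‖g (p : ℕ × ℕ).2‖ /
      (Nat.lcm (p : ℕ × ℕ).1 (p : ℕ × ℕ).2 : ℝ) := fun p =>
    div_nonneg (mul_nonneg (norm_nonneg _) (norm_nonneg _)) (Nat.cast_nonneg _)
  have hFsum : Summable (fun p : S =>
      ‖g (p : ℕ × ℕ).1‖ * ‖g (p : ℕ × ℕ).2‖ /
        (Nat.lcm (p : ℕ × ℕ).1 (p : ℕ × ℕ).2 : ℝ)) :=
    Summable.of_nonneg_of_le hFnonneg key hdom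
  calc ∑' p : S, ‖g (p : ℕ × ℕ).1‖ * ‖g (p : ℕ × ℕ).2‖ /
        (Nat.lcm (p : ℕ × ℕ).1 (p : ℕ × ℕ).2 : ℝ)
      ≤ ∑' p : S, X ^ (2 * ε - 1) * G (ι p) := Summable.tsum_le_tsum key hFsum hdom
    _ = X ^ (2 * ε - 1) * ∑' p : S, G (ι p) := tsum_mul_left
    _ ≤ X ^ (2 * ε - 1) * ∑' t, G t := by
        apply mul_le_mul_of_nonneg_left _ hXrpos.le
        exact Summable.tsum_le_tsum_of_inj ι hι (fun c _ => hGnonneg c) (fun p => le_rfl) hGιsum hGsum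
    _ = (∑' t, G t) * X ^ (2 * ε - 1) := mul_comm _ _
end
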